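/- Let D = diag(μ_1,...,μ_n) be a real diagonal matrix with μ_1 ≤ ... ≤ μ_n and let p ∈ {1,...,n}. The function B ↦ σ_p(λ(B)) (the p-th elementary symmetric polynomial of the eigenvalues of the symmetric matrix B) has first partial derivatives at D given by ∂σ_p(λ(B))/∂b_{jk}|_{B=D} = σ_{p-1}(μ|j) δ_{jk}, and second partial derivatives: ∂²σ_p(λ(B))/(∂b_{lm}∂b_{jk})|_{B=D} = σ_{p-2}(μ|jl) if j=k, l=m, l≠j; = -½σ_{p-2}(μ|jk) if j=l, k=m, k≠j or j=m, k=l, k≠j; and = 0 otherwise. -/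

import Mathlib

open Matrix

/-- The `p`-th elementary symmetric polynomial of `μ : Fin n → ℝ`. -/
noncomputable def esymm (n p : ℕ) (μ : Fin n → ℝ) : ℝ :=
  ∑ t ∈ Finset.powersetCard p Finset.univ, ∏ i ∈ t, μ i

/-- `σ_p` for integer `p`, with `σ_p = 0` for `p < 0`. -/
noncomputable def esymmZ (n : ℕ) (p : ℤ) (μ : Fin n → ℝ) : ℝ :=
  if 0 ≤ p then esymm n p.toNat μ else 0

/-- Sum of all `p×p` principal minors of `M` (read off from the characteristic
polynomial); it equals `σ_p` of the eigenvalues of `M` when `M` is symmetric. -/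
noncomputable def pMinorSum (n p : ℕ) (M : Matrix (Fin n) (Fin n) ℝ) : ℝ :=
  (-1 : ℝ) ^ p * M.charpoly.coeff (n - p)

/-- The symmetrization `½(B+Bᵀ)` of a square array, as a matrix. -/
noncomputable def symHalf (n : ℕ) (B : Fin n → Fin n → ℝ) : Matrix (Fin n) (Fin n) ℝ :=
  (1 / 2 : ℝ) • (Matrix.of B + (Matrix.of B)ᵀ)

/-- `σ_p(λ(B))`: the `p`-th elementary symmetric function of the eigenvalues of the
symmetrization of `B`, expressed via principal minors. -/
noncomputable def sigmaLam (n p : ℕ) (B : Fin n → Fin n → ℝ) : ℝ :=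
  pMinorSum n p (symHalf n B)

/-- The diagonal array with diagonal `μ`. -/
noncomputable def diagFun (n : ℕ) (μ : Fin n → ℝ) : Fin n → Fin n → ℝ :=
  fun i j => if i = j then μ i else 0

/-- The single-entry direction `e_{jk}` (as an array). -/
noncomputable def entryDir (n : ℕ) (j k : Fin n) : Fin n → Fin n → ℝ :=
  fun a b => if a = j ∧ b = k then 1 else 0


section Aux

open Matrix Polynomial

set_option linter.unusedSectionVars false
set_option maxRecDepth 8000
set_option maxHeartbeats 1000000


variable {R : Type*} [CommRing R] {n : ℕ}

lemma updR_comm (A : Matrix (Fin n) (Fin n) R) {a b : Fin n} (hab : a ≠ b) (u v : Fin n → R) :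
    updateRow (updateRow A b v) a u = updateRow (updateRow A a u) b v := by
  ext i j
  by_cases hia : i = a
  · subst hia; simp [Matrix.updateRow_apply, hab]
  · by_cases hib : i = b <;> simp [Matrix.updateRow_apply, hia, hib, hab.symm]

lemma entryM (w : Fin n → R) (a b c d : Fin n) (x y : R) (i j : Fin n) :
    (Matrix.diagonal w + x • Matrix.single a b (1:R) + y • Matrix.single c d (1:R)) i j
      = (if i = j then w i else 0) + (if a = i ∧ b = j then x else 0)
          + (if c = i ∧ d = j then y else 0) := by
  simp only [Matrix.add_apply, Matrix.smul_apply, Matrix.single, Matrix.diagonal,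
    Matrix.of_apply, smul_ite, smul_eq_mul, mul_one, mul_zero, smul_zero]
  split_ifs <;> ring

set_option linter.unusedSectionVars false
set_option maxRecDepth 4000

section Det

variable (w : Fin n → R)

local notation "N" => Matrix.diagonal w

lemma det_upd_single (a b : Fin n) (hab : a ≠ b) (x : R) :
    (updateRow (Matrix.diagonal w) a (Pi.single b x)).det = 0 := by
  apply det_eq_zero_of_column_eq_zero a
  intro i
  by_cases hia : i = a
  · subst hia; simp [Matrix.updateRow_self, Pi.single_eq_of_ne hab]
  · simp [Matrix.updateRow_ne hia, Matrix.diagonal_apply_ne _ hia]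

/-- det of `diagonal w` with rows `a,b` replaced by single entries at `b,a` resp. -/
lemma det_swap_rows (a b : Fin n) (hab : a ≠ b) (x y : R) :
    (updateRow (updateRow (Matrix.diagonal w) a (Pi.single b x)) b (Pi.single a y)).det
      = -(y * (x * ∏ i ∈ (Finset.univ.erase b).erase a, w i)) := by
  have hQ : updateRow (updateRow (Matrix.diagonal w) a (Pi.single b x)) b (Pi.single a y)
      = (Matrix.diagonal (Function.update (Function.update w a x) b y)).submatrix id
          (Equiv.swap a b) := by
    ext i j
    simp only [Matrix.updateRow_apply, Matrix.submatrix_apply, id_eq, Pi.single_apply,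
      Matrix.diagonal_apply, Function.update_apply, Equiv.swap_apply_def]
    split_ifs <;> simp_all <;> aesop
  rw [hQ, Matrix.det_permute', Matrix.det_diagonal, Equiv.Perm.sign_swap hab]
  simp only [Finset.erase_eq, Units.val_neg, Units.val_one, Int.cast_neg, Int.cast_one]
  rw [Finset.prod_update_of_mem (Finset.mem_univ b)]
  rw [Finset.prod_update_of_mem
    (Finset.mem_sdiff.mpr ⟨Finset.mem_univ a, by simp [hab]⟩)]
  ring

lemma det_pair (a b : Fin n) (hab : a ≠ b) (x y : R) :
    (Matrix.diagonal w + x • Matrix.single a b (1:R) + y • Matrix.single b a (1:R)).det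
      = (∏ i, w i) - x * y * ∏ i ∈ (Finset.univ.erase b).erase a, w i := by
  have hM : Matrix.diagonal w + x • Matrix.single a b (1:R) + y • Matrix.single b a (1:R)
      = updateRow (updateRow (Matrix.diagonal w) b (Matrix.diagonal w b + Pi.single a y)) a
          (Matrix.diagonal w a + Pi.single b x) := by
    ext i j
    rw [entryM]
    simp only [Matrix.updateRow_apply, Pi.add_apply, Pi.single_apply, Matrix.diagonal_apply]
    split_ifs <;> ((try subst_vars) <;> (first | ring1 | (exfalso; grind) | grind))
  rw [hM, det_updateRow_add]
  have e1 : updateRow (updateRow (Matrix.diagonal w) b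
        (Matrix.diagonal w b + Pi.single a y)) a (Matrix.diagonal w a)
      = updateRow (Matrix.diagonal w) b (Matrix.diagonal w b + Pi.single a y) := by
    conv_lhs => rw [show Matrix.diagonal w a
      = (updateRow (Matrix.diagonal w) b (Matrix.diagonal w b + Pi.single a y)) a from
        (Matrix.updateRow_ne hab).symm]
    exact Matrix.updateRow_eq_self _ _
  rw [e1, det_updateRow_add, Matrix.updateRow_eq_self, det_upd_single w b a hab.symm y]
  rw [updR_comm _ hab, det_updateRow_add]
  have e2 : updateRow (updateRow (Matrix.diagonal w) a (Pi.single b x)) b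
        (Matrix.diagonal w b)
      = updateRow (Matrix.diagonal w) a (Pi.single b x) := by
    conv_lhs => rw [show Matrix.diagonal w b
      = (updateRow (Matrix.diagonal w) a (Pi.single b x)) b from
        (Matrix.updateRow_ne hab.symm).symm]
    exact Matrix.updateRow_eq_self _ _
  rw [e2, det_upd_single w a b hab x, det_swap_rows w a b hab x y, Matrix.det_diagonal]
  ring

lemma det_acyclic (a b c d : Fin n) (hab : a ≠ b) (hcd : c ≠ d) (h : ¬(c = b ∧ d = a))
    (x y : R) :
    (Matrix.diagonal w + x • Matrix.single a b (1:R) + y • Matrix.single c d (1:R)).det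
      = ∏ i, w i := by
  by_cases hac : a = c
  · subst hac
    have hda : d ≠ a := fun h => hcd h.symm
    have hM : Matrix.diagonal w + x • Matrix.single a b (1:R) + y • Matrix.single a d (1:R)
        = updateRow (Matrix.diagonal w) a
            ((Matrix.diagonal w a + Pi.single b x) + Pi.single d y) := by
      ext i j
      rw [entryM]
      simp only [Matrix.updateRow_apply, Pi.add_apply, Pi.single_apply, Matrix.diagonal_apply]
      split_ifs <;> ((try subst_vars) <;> (first | ring1 | (exfalso; grind) | grind))
    rw [hM, det_updateRow_add, det_updateRow_add, Matrix.updateRow_eq_self,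
      det_upd_single w a b hab x, det_upd_single w a d hcd y,
      Matrix.det_diagonal]
    ring
  · have hM : Matrix.diagonal w + x • Matrix.single a b (1:R) + y • Matrix.single c d (1:R)
        = updateRow (updateRow (Matrix.diagonal w) c (Matrix.diagonal w c + Pi.single d y)) a
            (Matrix.diagonal w a + Pi.single b x) := by
      ext i j
      rw [entryM]
      simp only [Matrix.updateRow_apply, Pi.add_apply, Pi.single_apply, Matrix.diagonal_apply]
      split_ifs <;> ((try subst_vars) <;> (first | ring1 | (exfalso; grind) | grind))
    rw [hM, det_updateRow_add]
    have e1 : updateRow (updateRow (Matrix.diagonal w) c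
          (Matrix.diagonal w c + Pi.single d y)) a (Matrix.diagonal w a)
        = updateRow (Matrix.diagonal w) c (Matrix.diagonal w c + Pi.single d y) := by
      conv_lhs => rw [show Matrix.diagonal w a
        = (updateRow (Matrix.diagonal w) c (Matrix.diagonal w c + Pi.single d y)) a from
          (Matrix.updateRow_ne hac).symm]
      exact Matrix.updateRow_eq_self _ _
    rw [e1, det_updateRow_add, Matrix.updateRow_eq_self, det_upd_single w c d hcd y]
    rw [updR_comm _ hac, det_updateRow_add]
    have e2 : updateRow (updateRow (Matrix.diagonal w) a (Pi.single b x)) c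
          (Matrix.diagonal w c)
        = updateRow (Matrix.diagonal w) a (Pi.single b x) := by
      conv_lhs => rw [show Matrix.diagonal w c
        = (updateRow (Matrix.diagonal w) a (Pi.single b x)) c from
          (Matrix.updateRow_ne (Ne.symm hac)).symm]
      exact Matrix.updateRow_eq_self _ _
    rw [e2, det_upd_single w a b hab x]
    have hQ2 : (updateRow (updateRow (Matrix.diagonal w) a (Pi.single b x)) c
        (Pi.single d y)).det = 0 := by
      by_cases hda : d = a
      · have hcb : c ≠ b := fun hcb => h ⟨hcb, hda⟩
        apply det_eq_zero_of_column_eq_zero c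
        intro i
        by_cases hic : i = c
        · subst hic; simp [Matrix.updateRow_self, Pi.single_eq_of_ne hcd]
        · rw [Matrix.updateRow_ne hic]
          by_cases hia : i = a
          · subst hia; simp [Matrix.updateRow_self, Pi.single_eq_of_ne hcb]
          · rw [Matrix.updateRow_ne hia]
            exact Matrix.diagonal_apply_ne _ hic
      · apply det_eq_zero_of_column_eq_zero a
        intro i
        by_cases hic : i = c
        · subst hic; simp [Matrix.updateRow_self, Pi.single_eq_of_ne (fun hh => hda hh.symm)]
        · rw [Matrix.updateRow_ne hic]
          by_cases hia : i = a
          · subst hia; simp [Matrix.updateRow_self, Pi.single_eq_of_ne hab]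
          · rw [Matrix.updateRow_ne hia]
            exact Matrix.diagonal_apply_ne _ hia
    rw [hQ2, Matrix.det_diagonal]
    ring

end Det


section CharpolyLemmas

variable {n : ℕ}

lemma charmatrix_decomp (ν : Fin n → ℝ) (a b c d : Fin n) (x y : ℝ) :
    charmatrix (Matrix.diagonal ν + x • Matrix.single a b (1:ℝ) + y • Matrix.single c d (1:ℝ))
      = Matrix.diagonal (fun i => (X:ℝ[X]) - C (ν i))
          + (-C x) • Matrix.single a b (1:ℝ[X]) + (-C y) • Matrix.single c d (1:ℝ[X]) := by
  refine Matrix.ext fun i j => ?_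
  rw [entryM]
  by_cases hij : i = j
  · subst hij
    rw [charmatrix_apply_eq, entryM]
    simp only [Matrix.diagonal_apply_eq, map_add, apply_ite C, map_zero]
    split_ifs <;> ring
  · rw [charmatrix_apply_ne _ _ _ hij, entryM]
    simp only [map_add, apply_ite C, map_zero]
    split_ifs <;> ring

lemma charpoly_diag (ν : Fin n → ℝ) :
    (Matrix.diagonal ν).charpoly = ∏ i, (X - C (ν i)) := by
  rw [Matrix.charpoly]
  have : charmatrix (Matrix.diagonal ν) = Matrix.diagonal (fun i => (X:ℝ[X]) - C (ν i)) := by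
    refine Matrix.ext fun i j => ?_
    by_cases hij : i = j
    · subst hij; rw [charmatrix_apply_eq, Matrix.diagonal_apply_eq, Matrix.diagonal_apply_eq]
    · rw [charmatrix_apply_ne _ _ _ hij, Matrix.diagonal_apply_ne _ hij,
        Matrix.diagonal_apply_ne _ hij, map_zero, neg_zero]
  rw [this, Matrix.det_diagonal]

lemma charpoly_pair (ν : Fin n → ℝ) (a b : Fin n) (hab : a ≠ b) (x y : ℝ) :
    (Matrix.diagonal ν + x • Matrix.single a b (1:ℝ)
        + y • Matrix.single b a (1:ℝ)).charpoly
      = (∏ i, (X - C (ν i)))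
          - C (x*y) * ∏ i ∈ (Finset.univ.erase b).erase a, (X - C (ν i)) := by
  rw [Matrix.charpoly, charmatrix_decomp, det_pair _ a b hab]
  rw [show (-C x) * (-C y) = C (x*y) from by rw [C_mul]; ring]

lemma charpoly_acyclic (ν : Fin n → ℝ) (a b c d : Fin n) (hab : a ≠ b) (hcd : c ≠ d)
    (h : ¬(c = b ∧ d = a)) (x y : ℝ) :
    (Matrix.diagonal ν + x • Matrix.single a b (1:ℝ)
        + y • Matrix.single c d (1:ℝ)).charpoly = ∏ i, (X - C (ν i)) := by
  rw [Matrix.charpoly, charmatrix_decomp, det_acyclic _ a b c d hab hcd h]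

lemma coeff_prodXsubC (ν : Fin n → ℝ) (s : Finset (Fin n)) (q : ℕ) (hq : q ≤ s.card) :
    (∏ i ∈ s, (X - C (ν i))).coeff (s.card - q)
      = (-1)^q * ∑ t ∈ Finset.powersetCard q s, ∏ i ∈ t, ν i := by
  have h1 : (∏ i ∈ s, (X - C (ν i))) = ((s.val.map ν).map (fun r => X - C r)).prod := by
    rw [Multiset.map_map]; rfl
  have hcard : Multiset.card (s.val.map ν) = s.card := by simp
  have h2 := Multiset.prod_X_sub_C_coeff (s.val.map ν) (k := s.card - q)
    (by rw [hcard]; omega)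
  rw [h1, h2, hcard, Nat.sub_sub_self hq, Finset.esymm_map_val]

lemma natDegree_prodXsubC (ν : Fin n → ℝ) (s : Finset (Fin n)) :
    (∏ i ∈ s, (X - C (ν i))).natDegree = s.card := by
  rw [Polynomial.natDegree_prod]
  · simp
  · intro i _; exact Polynomial.X_sub_C_ne_zero _

end CharpolyLemmas

section EsymmLemmas

variable {n : ℕ}

lemma esymm_eq_sum (q : ℕ) (ν w : Fin n → ℝ) (s : Finset (Fin n))
    (h0 : ∀ i, i ∉ s → w i = 0) (h1 : ∀ i ∈ s, w i = ν i) :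
    esymm n q w = ∑ t ∈ Finset.powersetCard q s, ∏ i ∈ t, ν i := by
  rw [esymm, ← Finset.sum_subset (Finset.powersetCard_mono (Finset.subset_univ s))
    (fun t ht hnt => ?_)]
  · exact Finset.sum_congr rfl fun t ht => Finset.prod_congr rfl fun i hi =>
      h1 i ((Finset.mem_powersetCard.mp ht).1 hi)
  · obtain ⟨i, hit, his⟩ : ∃ i ∈ t, i ∉ s := by
      by_contra hh; push_neg at hh
      exact hnt (Finset.mem_powersetCard.mpr ⟨hh, (Finset.mem_powersetCard.mp ht).2⟩)
    exact Finset.prod_eq_zero hit (h0 i his)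

lemma esymm_split (q : ℕ) (hq : 1 ≤ q) (w : Fin n → ℝ) (a : Fin n) :
    esymm n q w = (∑ t ∈ Finset.powersetCard q (Finset.univ.erase a), ∏ i ∈ t, w i)
      + w a * ∑ t ∈ Finset.powersetCard (q-1) (Finset.univ.erase a), ∏ i ∈ t, w i := by
  obtain ⟨m, rfl⟩ : ∃ m, q = m + 1 := ⟨q - 1, by omega⟩
  have ha : a ∉ Finset.univ.erase a := Finset.notMem_erase a _
  have hdisj : Disjoint (Finset.powersetCard (m+1) (Finset.univ.erase a))
      ((Finset.powersetCard m (Finset.univ.erase a)).image (insert a)) := by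
    rw [Finset.disjoint_left]
    intro t ht1 ht2
    obtain ⟨u, _, rfl⟩ := Finset.mem_image.mp ht2
    exact ha ((Finset.mem_powersetCard.mp ht1).1 (Finset.mem_insert_self a u))
  have hinj : ∀ x ∈ Finset.powersetCard m (Finset.univ.erase a),
      ∀ y ∈ Finset.powersetCard m (Finset.univ.erase a), insert a x = insert a y → x = y := by
    intro x hx y hy hxy
    have hax : a ∉ x := fun hh => ha ((Finset.mem_powersetCard.mp hx).1 hh)
    have hay : a ∉ y := fun hh => ha ((Finset.mem_powersetCard.mp hy).1 hh)
    rw [← Finset.erase_insert hax, hxy, Finset.erase_insert hay]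
  rw [esymm]
  conv_lhs => rw [show (Finset.univ : Finset (Fin n)) = insert a (Finset.univ.erase a) from
    (Finset.insert_erase (Finset.mem_univ a)).symm]
  rw [Finset.powersetCard_succ_insert ha, Finset.sum_union hdisj, Finset.sum_image hinj]
  have hins : ∀ t ∈ Finset.powersetCard m (Finset.univ.erase a),
      ∏ i ∈ insert a t, w i = w a * ∏ i ∈ t, w i := fun t ht =>
    Finset.prod_insert (fun hat => ha ((Finset.mem_powersetCard.mp ht).1 hat))
  rw [Finset.sum_congr rfl hins, ← Finset.mul_sum]
  simp

lemma esymm_zero_eq_one (w : Fin n → ℝ) : esymm n 0 w = 1 := by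
  simp [esymm]

lemma esymm_update (μ : Fin n → ℝ) (a : Fin n) (x : ℝ) (q : ℕ) (hq : 1 ≤ q) :
    esymm n q (Function.update μ a x)
      = esymm n q (Function.update μ a 0)
        + x * esymm n (q-1) (Function.update μ a 0) := by
  have hprod : ∀ (r : ℕ) (z : ℝ),
      ∑ t ∈ Finset.powersetCard r (Finset.univ.erase a), ∏ i ∈ t, (Function.update μ a z) i
        = ∑ t ∈ Finset.powersetCard r (Finset.univ.erase a), ∏ i ∈ t, μ i := by
    intro r z
    refine Finset.sum_congr rfl fun t ht => Finset.prod_congr rfl fun i hi => ?_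
    exact Function.update_of_ne
      (Finset.ne_of_mem_erase ((Finset.mem_powersetCard.mp ht).1 hi)) _ _
  have hzero : ∀ r : ℕ, esymm n r (Function.update μ a 0)
      = ∑ t ∈ Finset.powersetCard r (Finset.univ.erase a), ∏ i ∈ t, μ i := by
    intro r
    refine esymm_eq_sum r μ _ (Finset.univ.erase a) (fun i hi => ?_) (fun i hi => ?_)
    · have : i = a := by simpa using hi
      subst this; simp
    · exact Function.update_of_ne (Finset.ne_of_mem_erase hi) _ _
  rw [esymm_split q hq (Function.update μ a x) a, hprod, hprod, Function.update_self,
    hzero, hzero]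

end EsymmLemmas

section PMinorLemmas

variable {n p : ℕ}

lemma nge2 {a b : Fin n} (hab : a ≠ b) : 2 ≤ n := by
  by_contra hh
  push_neg at hh
  interval_cases n
  · exact a.elim0
  · exact hab (Subsingleton.elim a b)

lemma card_erase2 {a b : Fin n} (hab : a ≠ b) :
    ((Finset.univ.erase b).erase a).card = n - 2 := by
  rw [Finset.card_erase_of_mem (Finset.mem_erase.mpr ⟨hab, Finset.mem_univ a⟩),
    Finset.card_erase_of_mem (Finset.mem_univ b)]
  simp only [Finset.card_univ, Fintype.card_fin]
  omega

lemma esymm_erase2 (ν : Fin n → ℝ) {a b : Fin n} (hab : a ≠ b) (q : ℕ) :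
    esymm n q (Function.update (Function.update ν a 0) b 0)
      = ∑ t ∈ Finset.powersetCard q ((Finset.univ.erase b).erase a), ∏ i ∈ t, ν i := by
  refine esymm_eq_sum q ν _ _ (fun i hi => ?_) (fun i hi => ?_)
  · simp only [Finset.mem_erase, Finset.mem_univ, and_true, not_and_or, not_not] at hi
    rcases hi with hi | hi
    · subst hi; rw [Function.update_of_ne hab, Function.update_self]
    · subst hi; rw [Function.update_self]
  · simp only [Finset.mem_erase, Finset.mem_univ, and_true] at hi
    rw [Function.update_of_ne hi.2, Function.update_of_ne hi.1]

lemma neg_one_sq_pow (p : ℕ) : ((-1:ℝ)^p) * ((-1:ℝ)^p) = 1 := by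
  rw [← pow_add]
  exact Even.neg_one_pow ⟨p, rfl⟩

lemma pMinorSum_diag (hpn : p ≤ n) (ν : Fin n → ℝ) :
    pMinorSum n p (Matrix.diagonal ν) = esymm n p ν := by
  rw [pMinorSum, charpoly_diag]
  have hc : n - p = (Finset.univ : Finset (Fin n)).card - p := by simp
  rw [hc, coeff_prodXsubC ν Finset.univ p (by simpa using hpn), ← mul_assoc,
    neg_one_sq_pow, one_mul, esymm]

lemma pMinorSum_acyclic (hpn : p ≤ n) (ν : Fin n → ℝ) (a b c d : Fin n) (hab : a ≠ b)
    (hcd : c ≠ d) (h : ¬(c = b ∧ d = a)) (x y : ℝ) :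
    pMinorSum n p (Matrix.diagonal ν + x • Matrix.single a b (1:ℝ)
        + y • Matrix.single c d (1:ℝ)) = esymm n p ν := by
  rw [pMinorSum, charpoly_acyclic ν a b c d hab hcd h]
  have hc : n - p = (Finset.univ : Finset (Fin n)).card - p := by simp
  rw [hc, coeff_prodXsubC ν Finset.univ p (by simpa using hpn), ← mul_assoc,
    neg_one_sq_pow, one_mul, esymm]

lemma pMinorSum_pair (hp : 1 ≤ p) (hpn : p ≤ n) (ν : Fin n → ℝ) {a b : Fin n} (hab : a ≠ b)
    (x y : ℝ) :
    pMinorSum n p (Matrix.diagonal ν + x • Matrix.single a b (1:ℝ)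
        + y • Matrix.single b a (1:ℝ))
      = esymm n p ν
        - x * y * esymmZ n ((p:ℤ)-2) (Function.update (Function.update ν a 0) b 0) := by
  have hn2 : 2 ≤ n := nge2 hab
  rw [pMinorSum, charpoly_pair ν a b hab, Polynomial.coeff_sub, Polynomial.coeff_C_mul]
  have h1 : (∏ i, (X - C (ν i))).coeff (n-p) = (-1:ℝ)^p * esymm n p ν := by
    have hc : n - p = (Finset.univ : Finset (Fin n)).card - p := by simp
    rw [hc, coeff_prodXsubC ν Finset.univ p (by simpa using hpn), esymm]
  have hsc : ((Finset.univ.erase b).erase a).card = n - 2 := card_erase2 hab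
  by_cases hp2 : 2 ≤ p
  · have h2 : (∏ i ∈ (Finset.univ.erase b).erase a, (X - C (ν i))).coeff (n-p)
        = (-1:ℝ)^(p-2) * esymmZ n ((p:ℤ)-2)
            (Function.update (Function.update ν a 0) b 0) := by
      have hz : esymmZ n ((p:ℤ)-2) (Function.update (Function.update ν a 0) b 0)
          = esymm n (p-2) (Function.update (Function.update ν a 0) b 0) := by
        rw [esymmZ, if_pos (by omega)]
        congr 1
        omega
      have hnp : n - p = ((Finset.univ.erase b).erase a).card - (p - 2) := by omega
      rw [hnp, coeff_prodXsubC ν _ (p-2) (by omega), hz, esymm_erase2 ν hab (p-2)]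
    rw [h1, h2]
    have e2 : (-1:ℝ)^p * (-1:ℝ)^(p-2) = 1 := by
      rw [← pow_add]
      exact Even.neg_one_pow ⟨p-1, by omega⟩
    set E := esymm n p ν
    set S := esymmZ n ((p:ℤ)-2) (Function.update (Function.update ν a 0) b 0)
    linear_combination E * neg_one_sq_pow p - x * y * S * e2
  · have hp1 : p = 1 := by omega
    subst hp1
    have hz2 : esymmZ n (((1:ℕ):ℤ)-2) (Function.update (Function.update ν a 0) b 0) = 0 := by
      rw [esymmZ, if_neg (by norm_num)]
    have h2 : (∏ i ∈ (Finset.univ.erase b).erase a, (X - C (ν i))).coeff (n-1) = 0 := by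
      apply Polynomial.coeff_eq_zero_of_natDegree_lt
      rw [natDegree_prodXsubC, hsc]
      omega
    rw [h1, h2, hz2]
    ring

end PMinorLemmas

section AnalysisInfra

open Matrix Polynomial

variable {n p : ℕ}

/-- `pMinorSum` as a function on arrays. -/
noncomputable def hfun (n p : ℕ) : (Fin n → Fin n → ℝ) → ℝ :=
  fun A => pMinorSum n p (Matrix.of A)

/-- symmetrization as a continuous linear map on arrays -/
noncomputable def symCLM (n : ℕ) : (Fin n → Fin n → ℝ) →L[ℝ] (Fin n → Fin n → ℝ) :=
  LinearMap.toContinuousLinearMap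
    { toFun := fun B a b => (B a b + B b a) / 2
      map_add' := by
        intro B C; funext a b; simp only [Pi.add_apply]; ring
      map_smul' := by
        intro c B; funext a b
        simp only [Pi.smul_apply, smul_eq_mul, RingHom.id_apply]; ring }

lemma symCLM_apply (B : Fin n → Fin n → ℝ) (a b : Fin n) :
    symCLM n B a b = (B a b + B b a) / 2 := by
  rw [symCLM, LinearMap.coe_toContinuousLinearMap']
  rfl

lemma sigmaLam_eq_comp : sigmaLam n p = fun B => hfun n p (symCLM n B) := by
  funext B
  rw [sigmaLam, hfun]
  congr 1
  refine Matrix.ext fun a b => ?_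
  rw [symHalf, Matrix.smul_apply, Matrix.add_apply, Matrix.transpose_apply, Matrix.of_apply,
    Matrix.of_apply, Matrix.of_apply, symCLM_apply, smul_eq_mul]
  ring

lemma symCLM_diag (μ : Fin n → ℝ) : symCLM n (diagFun n μ) = diagFun n μ := by
  funext a b
  rw [symCLM_apply, diagFun, diagFun]
  by_cases hab : a = b
  · subst hab; simp
  · simp [hab, Ne.symm hab]

lemma symCLM_entry (j k : Fin n) :
    symCLM n (entryDir n j k) = (1/2 : ℝ) • (entryDir n j k + entryDir n k j) := by
  funext a b
  rw [symCLM_apply]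
  simp only [Pi.smul_apply, Pi.add_apply, smul_eq_mul, entryDir]
  have : (b = j ∧ a = k) ↔ (a = k ∧ b = j) := and_comm
  rw [if_congr this rfl rfl]
  ring

lemma eval_charpoly' (M : Matrix (Fin n) (Fin n) ℝ) (r : ℝ) :
    (M.charpoly).eval r = (Matrix.of fun i j => (if i = j then r else 0) - M i j).det := by
  rw [Matrix.charpoly, show Polynomial.eval r (charmatrix M).det
    = (Polynomial.evalRingHom r) (charmatrix M).det from rfl, RingHom.map_det]
  congr 1
  refine Matrix.ext fun i j => ?_
  by_cases hij : i = j
  · subst hij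
    simp [Matrix.map_apply, charmatrix_apply_eq]
  · simp [Matrix.map_apply, charmatrix_apply_ne _ _ _ hij, hij]

lemma contDiff_coord (a b : Fin n) :
    ContDiff ℝ ⊤ (fun A : Fin n → Fin n → ℝ => A a b) :=
  ContinuousLinearMap.contDiff
    ((ContinuousLinearMap.proj b).comp
      (ContinuousLinearMap.proj a : (Fin n → Fin n → ℝ) →L[ℝ] (Fin n → ℝ)))

lemma contDiff_det_aux (r : ℝ) :
    ContDiff ℝ ⊤ (fun A : Fin n → Fin n → ℝ =>
      (Matrix.of fun i j => (if i = j then r else 0) - A i j).det) := by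
  have hrw : (fun A : Fin n → Fin n → ℝ =>
      (Matrix.of fun i j => (if i = j then r else 0) - A i j).det)
      = fun A => ∑ σ : Equiv.Perm (Fin n), ((Equiv.Perm.sign σ : ℤ) : ℝ)
          * ∏ i, ((if σ i = i then r else 0) - A (σ i) i) := by
    funext A
    rw [Matrix.det_apply']
    rfl
  rw [hrw]
  refine ContDiff.sum fun σ _ => ContDiff.mul contDiff_const ?_
  exact contDiff_prod fun i _ => contDiff_const.sub (contDiff_coord (σ i) i)

lemma charpoly_coeff_rep (q : ℕ) (M : Matrix (Fin n) (Fin n) ℝ) :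
    M.charpoly.coeff q = ∑ i ∈ Finset.range (n+1),
      (M.charpoly.eval (i:ℝ))
        * (Lagrange.basis (Finset.range (n+1)) (fun i : ℕ => (i:ℝ)) i).coeff q := by
  have hinj : Set.InjOn (fun i : ℕ => (i:ℝ)) (Finset.range (n+1)) :=
    fun i _ j _ h => Nat.cast_injective h
  have hdeg : M.charpoly.degree < (Finset.range (n+1)).card := by
    rw [Finset.card_range]
    refine lt_of_le_of_lt Polynomial.degree_le_natDegree ?_
    rw [Matrix.charpoly_natDegree_eq_dim]
    simp only [Fintype.card_fin]
    exact_mod_cast Nat.lt_succ_self n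
  conv_lhs => rw [Lagrange.eq_interpolate hinj hdeg]
  rw [Lagrange.interpolate_apply, Polynomial.finset_sum_coeff]
  exact Finset.sum_congr rfl fun i _ => Polynomial.coeff_C_mul _

lemma contDiff_hfun : ContDiff ℝ ⊤ (hfun n p) := by
  have hrw : hfun n p = fun A => (-1:ℝ)^p * ∑ i ∈ Finset.range (n+1),
      (Matrix.of (fun a b => (if a = b then (i:ℝ) else 0) - A a b)).det
        * (Lagrange.basis (Finset.range (n+1)) (fun i : ℕ => (i:ℝ)) i).coeff (n - p) := by
    funext A
    rw [hfun, pMinorSum, charpoly_coeff_rep]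
    congr 1
    refine Finset.sum_congr rfl fun i _ => ?_
    rw [eval_charpoly']
    rfl
  rw [hrw]
  exact contDiff_const.mul
    (ContDiff.sum fun i _ => (contDiff_det_aux _).mul contDiff_const)

lemma diff_hfun : Differentiable ℝ (hfun n p) :=
  (contDiff_hfun (n := n) (p := p)).differentiable (by simp)

lemma diff_fderiv_hfun : Differentiable ℝ (fderiv ℝ (hfun n p)) :=
  ((contDiff_hfun (n := n) (p := p)).fderiv_right (m := 1) le_top).differentiable one_ne_zero

lemma fderiv_dir {E : Type*} [NormedAddCommGroup E] [NormedSpace ℝ E] {f : E → ℝ} {x v : E}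
    (hf : DifferentiableAt ℝ f x) {c : ℝ}
    (h : HasDerivAt (fun t : ℝ => f (x + t • v)) c 0) : fderiv ℝ f x v = c := by
  have hγ : HasDerivAt (fun t : ℝ => x + t • v) v 0 := by
    simpa using ((hasDerivAt_id (0:ℝ)).smul_const v).const_add x
  have h0 : HasFDerivAt f (fderiv ℝ f x) ((fun t : ℝ => x + t • v) 0) := by
    simpa using hf.hasFDerivAt
  exact (h0.comp_hasDerivAt 0 hγ).unique h

lemma fderiv_sigma (B v : Fin n → Fin n → ℝ) :
    fderiv ℝ (sigmaLam n p) B v = fderiv ℝ (hfun n p) (symCLM n B) (symCLM n v) := by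
  rw [show sigmaLam n p = (hfun n p) ∘ (symCLM n) from sigmaLam_eq_comp,
    fderiv_comp _ (diff_hfun _) ((symCLM n).differentiableAt),
    (symCLM n).fderiv]
  rfl

lemma second_glue (v w x : Fin n → Fin n → ℝ) :
    fderiv ℝ (fun A => fderiv ℝ (hfun n p) A v) x w
      = (fderiv ℝ (fderiv ℝ (hfun n p)) x w) v := by
  rw [show (fun A => fderiv ℝ (hfun n p) A v)
      = (ContinuousLinearMap.apply ℝ ℝ v) ∘ (fderiv ℝ (hfun n p)) from rfl,
    fderiv_comp _ (ContinuousLinearMap.apply ℝ ℝ v).differentiableAt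
      (diff_fderiv_hfun x),
    (ContinuousLinearMap.apply ℝ ℝ v).fderiv]
  rfl

lemma second_dir {w v x : Fin n → Fin n → ℝ} {c : ℝ}
    (h : HasDerivAt (fun t : ℝ => fderiv ℝ (hfun n p) (x + t • w) v) c 0) :
    (fderiv ℝ (fderiv ℝ (hfun n p)) x w) v = c := by
  rw [← second_glue]
  exact fderiv_dir
    (((ContinuousLinearMap.apply ℝ ℝ v).differentiable.comp diff_fderiv_hfun) x) h

lemma hasDerivAt_affine (c₀ c₁ A : ℝ) (s₀ : ℝ) :
    HasDerivAt (fun s : ℝ => c₀ + (c₁ + s) * A) A s₀ := by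
  simpa using (((hasDerivAt_id s₀).const_add c₁).mul_const A).const_add c₀

lemma hasDerivAt_linear (c₀ k : ℝ) (s₀ : ℝ) :
    HasDerivAt (fun s : ℝ => c₀ + s * k) k s₀ := by
  simpa using ((hasDerivAt_id s₀).mul_const k).const_add c₀

end AnalysisInfra

section OfLemmas

open Matrix

variable {n : ℕ}

lemma of_two (μ : Fin n → ℝ) (a b c d : Fin n) (t s : ℝ) :
    Matrix.of (diagFun n μ + t • entryDir n a b + s • entryDir n c d)
      = Matrix.diagonal μ + t • Matrix.single a b (1:ℝ) + s • Matrix.single c d (1:ℝ) := by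
  refine Matrix.ext fun i j => ?_
  rw [entryM]
  simp only [Matrix.of_apply, Pi.add_apply, Pi.smul_apply, smul_eq_mul, diagFun, entryDir,
    mul_ite, mul_one, mul_zero]
  split_ifs <;> ((try subst_vars) <;> (first | ring1 | (exfalso; grind) | grind))

lemma of_diag1 (μ : Fin n → ℝ) (a : Fin n) (t s : ℝ) :
    Matrix.of (diagFun n μ + t • entryDir n a a + s • entryDir n a a)
      = Matrix.diagonal (Function.update μ a (μ a + t + s)) := by
  refine Matrix.ext fun i j => ?_
  simp only [Matrix.of_apply, Pi.add_apply, Pi.smul_apply, smul_eq_mul, diagFun, entryDir,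
    Matrix.diagonal, Function.update_apply, mul_ite, mul_one, mul_zero]
  split_ifs <;> ((try subst_vars) <;> (first | ring1 | (exfalso; grind) | grind))

lemma of_diag2 (μ : Fin n → ℝ) {a c : Fin n} (hac : a ≠ c) (t s : ℝ) :
    Matrix.of (diagFun n μ + t • entryDir n a a + s • entryDir n c c)
      = Matrix.diagonal
          (Function.update (Function.update μ a (μ a + t)) c (μ c + s)) := by
  refine Matrix.ext fun i j => ?_
  simp only [Matrix.of_apply, Pi.add_apply, Pi.smul_apply, smul_eq_mul, diagFun, entryDir,
    Matrix.diagonal, Function.update_apply, mul_ite, mul_one, mul_zero]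
  split_ifs <;> ((try subst_vars) <;> (first | ring1 | (exfalso; grind) | grind))

lemma of_mixed1 (μ : Fin n → ℝ) (a : Fin n) {c d : Fin n} (hcd : c ≠ d) (t s : ℝ) :
    Matrix.of (diagFun n μ + t • entryDir n a a + s • entryDir n c d)
      = Matrix.diagonal (Function.update μ a (μ a + t)) + s • Matrix.single c d (1:ℝ)
          + (0:ℝ) • Matrix.single c d (1:ℝ) := by
  refine Matrix.ext fun i j => ?_
  rw [entryM]
  simp only [Matrix.of_apply, Pi.add_apply, Pi.smul_apply, smul_eq_mul, diagFun, entryDir,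
    Function.update_apply, mul_ite, mul_one, mul_zero]
  split_ifs <;> ((try subst_vars) <;> (first | ring1 | (exfalso; grind) | grind))

lemma of_mixed2 (μ : Fin n → ℝ) {a b : Fin n} (hab : a ≠ b) (c : Fin n) (t s : ℝ) :
    Matrix.of (diagFun n μ + t • entryDir n a b + s • entryDir n c c)
      = Matrix.diagonal (Function.update μ c (μ c + s)) + t • Matrix.single a b (1:ℝ)
          + (0:ℝ) • Matrix.single a b (1:ℝ) := by
  refine Matrix.ext fun i j => ?_
  rw [entryM]
  simp only [Matrix.of_apply, Pi.add_apply, Pi.smul_apply, smul_eq_mul, diagFun, entryDir,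
    Function.update_apply, mul_ite, mul_one, mul_zero]
  split_ifs <;> ((try subst_vars) <;> (first | ring1 | (exfalso; grind) | grind))

end OfLemmas

section PhiComputations

open Matrix

variable {n p : ℕ}

lemma Phi_line (μ : Fin n → ℝ) (a b c d : Fin n) (t : ℝ) {G : ℝ}
    (hK : HasDerivAt (fun s : ℝ =>
      hfun n p (diagFun n μ + t • entryDir n a b + s • entryDir n c d)) G 0) :
    fderiv ℝ (hfun n p) (diagFun n μ + t • entryDir n a b) (entryDir n c d) = G :=
  fderiv_dir (diff_hfun _) hK

lemma firstT (hp : 1 ≤ p) (hpn : p ≤ n) (μ : Fin n → ℝ) (a b : Fin n) :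
    fderiv ℝ (hfun n p) (diagFun n μ) (entryDir n a b)
      = if a = b then esymm n (p-1) (Function.update μ a 0) else 0 := by
  apply fderiv_dir (diff_hfun _)
  by_cases hab : a = b
  · subst hab
    have hfn : (fun t : ℝ => hfun n p (diagFun n μ + t • entryDir n a a))
        = fun t => esymm n p (Function.update μ a 0)
            + (μ a + t) * esymm n (p-1) (Function.update μ a 0) := by
      funext t
      simp only [hfun]
      rw [show diagFun n μ + t • entryDir n a a
          = diagFun n μ + t • entryDir n a a + (0:ℝ) • entryDir n a a from by
            rw [zero_smul, add_zero],
        of_diag1, pMinorSum_diag hpn, esymm_update μ a (μ a + t + 0) p hp]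
      ring
    rw [hfn, if_pos rfl]
    exact hasDerivAt_affine _ _ _ 0
  · have hfn : (fun t : ℝ => hfun n p (diagFun n μ + t • entryDir n a b))
        = fun _ => esymm n p μ := by
      funext t
      simp only [hfun]
      rw [show diagFun n μ + t • entryDir n a b
          = diagFun n μ + t • entryDir n a b + (0:ℝ) • entryDir n a b from by
            rw [zero_smul, add_zero],
        of_two, pMinorSum_acyclic hpn μ a b a b hab hab (fun hh => hab hh.1) t 0]
    rw [hfn, if_neg hab]
    exact hasDerivAt_const 0 _

lemma Tprime (hp : 1 ≤ p) (hpn : p ≤ n) (μ : Fin n → ℝ) (a b c d : Fin n) :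
    (fderiv ℝ (fderiv ℝ (hfun n p)) (diagFun n μ) (entryDir n a b)) (entryDir n c d)
      = if a = b ∧ c = d ∧ a ≠ c
          then esymmZ n ((p:ℤ)-2) (Function.update (Function.update μ a 0) c 0)
        else if a ≠ b ∧ c = b ∧ d = a
          then -esymmZ n ((p:ℤ)-2) (Function.update (Function.update μ a 0) b 0)
        else 0 := by
  apply second_dir
  by_cases hab : a = b
  · subst hab
    by_cases hcd : c = d
    · subst hcd
      by_cases hac : a = c
      · subst hac
        have hΦ : ∀ t : ℝ,
            fderiv ℝ (hfun n p) (diagFun n μ + t • entryDir n a a) (entryDir n a a)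
              = esymm n (p-1) (Function.update μ a 0) := by
          intro t
          apply Phi_line
          have hfn : (fun s : ℝ =>
              hfun n p (diagFun n μ + t • entryDir n a a + s • entryDir n a a))
              = fun s => esymm n p (Function.update μ a 0)
                  + (μ a + t + s) * esymm n (p-1) (Function.update μ a 0) := by
            funext s
            simp only [hfun]
            rw [of_diag1, pMinorSum_diag hpn, esymm_update μ a (μ a + t + s) p hp]
          rw [hfn]
          exact hasDerivAt_affine _ _ _ 0
        rw [if_neg (fun hh => hh.2.2 rfl), if_neg (fun hh => hh.1 rfl),
          funext hΦ]
        exact hasDerivAt_const 0 _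
      · have hΦ : ∀ t : ℝ,
            fderiv ℝ (hfun n p) (diagFun n μ + t • entryDir n a a) (entryDir n c c)
              = esymm n (p-1)
                  (Function.update (Function.update μ a (μ a + t)) c 0) := by
          intro t
          apply Phi_line
          have hfn : (fun s : ℝ =>
              hfun n p (diagFun n μ + t • entryDir n a a + s • entryDir n c c))
              = fun s => esymm n p
                    (Function.update (Function.update μ a (μ a + t)) c 0)
                  + (μ c + s) * esymm n (p-1)
                      (Function.update (Function.update μ a (μ a + t)) c 0) := by
            funext s
            simp only [hfun]
            rw [of_diag2 μ hac, pMinorSum_diag hpn,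
              esymm_update (Function.update μ a (μ a + t)) c (μ c + s) p hp]
          rw [hfn]
          exact hasDerivAt_affine _ _ _ 0
        rw [if_pos ⟨rfl, rfl, hac⟩, funext hΦ]
        by_cases hp2 : 2 ≤ p
        · have hval : esymmZ n ((p:ℤ)-2) (Function.update (Function.update μ a 0) c 0)
              = esymm n (p-1-1) (Function.update (Function.update μ c 0) a 0) := by
            rw [esymmZ, if_pos (by omega), Function.update_comm hac]
            congr 1
            omega
          have hfn2 : (fun t : ℝ => esymm n (p-1)
                (Function.update (Function.update μ a (μ a + t)) c 0))
              = fun t => esymm n (p-1) (Function.update (Function.update μ c 0) a 0)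
                  + (μ a + t) * esymm n (p-1-1)
                      (Function.update (Function.update μ c 0) a 0) := by
            funext t
            rw [Function.update_comm hac,
              esymm_update (Function.update μ c 0) a (μ a + t) (p-1) (by omega)]
          rw [hfn2, hval]
          exact hasDerivAt_affine _ _ _ 0
        · have hp1 : p = 1 := by omega
          subst hp1
          have hfn2 : (fun t : ℝ => esymm n (1-1)
                (Function.update (Function.update μ a (μ a + t)) c 0))
              = fun _ => (1:ℝ) := by
            funext t
            rw [show (1:ℕ) - 1 = 0 from rfl, esymm_zero_eq_one]
          have hval : esymmZ n (((1:ℕ):ℤ)-2)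
              (Function.update (Function.update μ a 0) c 0) = 0 := by
            rw [esymmZ, if_neg (by norm_num)]
          rw [hfn2, hval]
          exact hasDerivAt_const 0 _
    · -- a = b, c ≠ d
      have hΦ : ∀ t : ℝ,
          fderiv ℝ (hfun n p) (diagFun n μ + t • entryDir n a a) (entryDir n c d)
            = (0:ℝ) := by
        intro t
        have h0 : (fun s : ℝ =>
            hfun n p (diagFun n μ + t • entryDir n a a + s • entryDir n c d))
            = fun _ => esymm n p (Function.update μ a (μ a + t)) := by
          funext s
          simp only [hfun]
          rw [of_mixed1 μ a hcd, pMinorSum_acyclic hpn _ c d c d hcd hcd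
            (fun hh => hcd hh.1) s 0]
        exact Phi_line μ a a c d t (h0 ▸ hasDerivAt_const 0 _)
      rw [if_neg (fun hh => hcd hh.2.1), if_neg (fun hh => hh.1 rfl), funext hΦ]
      exact hasDerivAt_const 0 _
  · -- a ≠ b
    by_cases hcd : c = d
    · subst hcd
      have hΦ : ∀ t : ℝ,
          fderiv ℝ (hfun n p) (diagFun n μ + t • entryDir n a b) (entryDir n c c)
            = esymm n (p-1) (Function.update μ c 0) := by
        intro t
        apply Phi_line
        have hfn : (fun s : ℝ =>
            hfun n p (diagFun n μ + t • entryDir n a b + s • entryDir n c c))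
            = fun s => esymm n p (Function.update μ c 0)
                + (μ c + s) * esymm n (p-1) (Function.update μ c 0) := by
          funext s
          simp only [hfun]
          rw [of_mixed2 μ hab c, pMinorSum_acyclic hpn _ a b a b hab hab
            (fun hh => hab hh.1) t 0, esymm_update μ c (μ c + s) p hp]
        rw [hfn]
        exact hasDerivAt_affine _ _ _ 0
      rw [if_neg (fun hh => hab hh.1), if_neg ?_, funext hΦ]
      · exact hasDerivAt_const 0 _
      · rintro ⟨h1, rfl, h3⟩
        exact h1 h3.symm
    · by_cases hmatch : c = b ∧ d = a
      · obtain ⟨rfl, rfl⟩ := hmatch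
        have hΦ : ∀ t : ℝ,
            fderiv ℝ (hfun n p) (diagFun n μ + t • entryDir n d c) (entryDir n c d)
              = 0 + t * (-esymmZ n ((p:ℤ)-2)
                  (Function.update (Function.update μ d 0) c 0)) := by
          intro t
          have hfn : (fun s : ℝ =>
              hfun n p (diagFun n μ + t • entryDir n d c + s • entryDir n c d))
              = fun s => esymm n p μ + s * (-(t * esymmZ n ((p:ℤ)-2)
                  (Function.update (Function.update μ d 0) c 0))) := by
            funext s
            simp only [hfun]
            rw [of_two, pMinorSum_pair hp hpn μ hab t s]
            ring
          have := Phi_line μ d c c d t (hfn ▸ hasDerivAt_linear (esymm n p μ)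
            (-(t * esymmZ n ((p:ℤ)-2) (Function.update (Function.update μ d 0) c 0))) 0)
          rw [this]
          ring
        rw [if_neg (fun hh => hh.2.2 hh.1), if_pos ⟨hab, rfl, rfl⟩, funext hΦ]
        exact hasDerivAt_linear 0 _ 0
      · have hΦ : ∀ t : ℝ,
            fderiv ℝ (hfun n p) (diagFun n μ + t • entryDir n a b) (entryDir n c d)
              = (0:ℝ) := by
          intro t
          have h0 : (fun s : ℝ =>
              hfun n p (diagFun n μ + t • entryDir n a b + s • entryDir n c d))
              = fun _ => esymm n p μ := by
            funext s
            simp only [hfun]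
            rw [of_two, pMinorSum_acyclic hpn μ a b c d hab hcd hmatch t s]
          exact Phi_line μ a b c d t (h0 ▸ hasDerivAt_const 0 _)
        rw [if_neg (fun hh => hab hh.1),
          if_neg (fun hh => hmatch ⟨hh.2.1, hh.2.2⟩), funext hΦ]
        exact hasDerivAt_const 0 _

end PhiComputations

end Aux

theorem stmt_11 (n p : ℕ) (hp : 1 ≤ p) (hpn : p ≤ n)
    (μ : Fin n → ℝ) (hmono : Monotone μ) :
    (∀ j k : Fin n,
      fderiv ℝ (sigmaLam n p) (diagFun n μ) (entryDir n j k)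
        = if j = k then esymm n (p - 1) (Function.update μ j 0) else 0) ∧
    (∀ j k l m : Fin n,
      fderiv ℝ (fun B => fderiv ℝ (sigmaLam n p) B (entryDir n l m)) (diagFun n μ)
          (entryDir n j k)
        = if j = k ∧ l = m ∧ l ≠ j then
            esymmZ n ((p : ℤ) - 2) (Function.update (Function.update μ j 0) l 0)
          else if j = l ∧ k = m ∧ k ≠ j then
            -(1 / 2) * esymmZ n ((p : ℤ) - 2) (Function.update (Function.update μ j 0) k 0)
          else if j = m ∧ k = l ∧ k ≠ j then
            -(1 / 2) * esymmZ n ((p : ℤ) - 2) (Function.update (Function.update μ j 0) k 0)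
          else 0) := by
  constructor
  · intro j k
    rw [fderiv_sigma, symCLM_diag, symCLM_entry]
    rw [_root_.map_smul, _root_.map_add, firstT hp hpn μ j k, firstT hp hpn μ k j]
    by_cases hjk : j = k
    · subst hjk
      simp only [if_pos rfl, smul_eq_mul]
      ring
    · have hkj : ¬ k = j := fun h => hjk h.symm
      simp only [if_neg hjk, if_neg hkj, smul_eq_mul]
      ring
  · intro j k l m
    have hrw : (fun B => fderiv ℝ (sigmaLam n p) B (entryDir n l m))
        = ((ContinuousLinearMap.apply ℝ ℝ (symCLM n (entryDir n l m))) ∘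
            (fderiv ℝ (hfun n p))) ∘ ⇑(symCLM n) := by
      funext B
      rw [Function.comp_apply, Function.comp_apply, fderiv_sigma]
      rfl
    rw [hrw, fderiv_comp _
        (((ContinuousLinearMap.apply ℝ ℝ (symCLM n (entryDir n l m))).differentiable.comp
          diff_fderiv_hfun) (symCLM n (diagFun n μ)))
        ((symCLM n).differentiableAt),
      (symCLM n).fderiv,
      fderiv_comp _
        ((ContinuousLinearMap.apply ℝ ℝ (symCLM n (entryDir n l m))).differentiableAt)
        (diff_fderiv_hfun _),
      (ContinuousLinearMap.apply ℝ ℝ (symCLM n (entryDir n l m))).fderiv]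
    simp only [ContinuousLinearMap.coe_comp', Function.comp_apply,
      ContinuousLinearMap.apply_apply, symCLM_diag]
    rw [symCLM_entry j k, symCLM_entry l m]
    simp only [_root_.map_smul, _root_.map_add, ContinuousLinearMap.smul_apply,
      ContinuousLinearMap.add_apply, ContinuousLinearMap.coe_smul', Pi.smul_apply,
      smul_eq_mul]
    rw [Tprime hp hpn μ j k l m, Tprime hp hpn μ j k m l, Tprime hp hpn μ k j l m,
      Tprime hp hpn μ k j m l]
    by_cases h1 : j = k
    · subst h1
      by_cases h2 : l = m
      · subst h2
        by_cases h3 : l = j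
        · subst h3
          simp
        · have hjl : j ≠ l := fun h => h3 h.symm
          have hcomm : Function.update (Function.update μ l 0) j 0
              = Function.update (Function.update μ j 0) l 0 :=
            Function.update_comm h3 _ _ _
          simp only [if_pos (And.intro rfl (And.intro rfl hjl)),
            if_pos (And.intro rfl (And.intro rfl h3)), ne_eq, not_true_eq_false,
            and_false, false_and, if_false, hcomm]
          simp [hjl, h3]
          ring
      · have hml : ¬ m = l := fun h => h2 h.symm
        simp [h2, hml]
    · by_cases h2 : l = m
      · subst h2
        have hc1 : ¬(j ≠ k ∧ l = k ∧ l = j) := fun ⟨u, v, w⟩ => u (w.symm.trans v)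
        have hc2 : ¬(k ≠ j ∧ l = j ∧ l = k) := fun ⟨u, v, w⟩ => u (w.symm.trans v)
        have hc3 : ¬(j = l ∧ k = l ∧ k ≠ j) := fun ⟨u, v, w⟩ => w (v.trans u.symm)
        have hkj : ¬ k = j := fun h => h1 h.symm
        have hp1 : ¬(l = k ∧ l = j) := fun ⟨u, v⟩ => h1 (v.symm.trans u)
        have hx : ¬(l = j ∧ l = k) := fun ⟨u, v⟩ => h1 (u.symm.trans v)
        have hy : ¬(j = l ∧ k = l) := fun ⟨u, v⟩ => h1 (u.trans v.symm)
        simp [h1, hc1, hc2, hc3, hkj, hp1, hx, hy]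
      · by_cases h3 : j = l ∧ k = m
        · obtain ⟨rfl, rfl⟩ := h3
          have hkj : k ≠ j := fun h => h1 h.symm
          have hcomm : Function.update (Function.update μ k 0) j 0
              = Function.update (Function.update μ j 0) k 0 :=
            Function.update_comm hkj _ _ _
          simp [h1, hkj, hcomm]
          ring
        · by_cases h4 : j = m ∧ k = l
          · obtain ⟨rfl, rfl⟩ := h4
            have hkj : k ≠ j := fun h => h1 h.symm
            have hcomm : Function.update (Function.update μ k 0) j 0
                = Function.update (Function.update μ j 0) k 0 :=
              Function.update_comm hkj _ _ _
            simp [h1, hkj, hcomm, h2]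
            ring
          · have hA : ¬(j ≠ k ∧ l = k ∧ m = j) :=
              fun ⟨_, v, w⟩ => h4 ⟨w.symm, v.symm⟩
            have hB : ¬(j ≠ k ∧ m = k ∧ l = j) :=
              fun ⟨_, v, w⟩ => h3 ⟨w.symm, v.symm⟩
            have hC : ¬(k ≠ j ∧ l = j ∧ m = k) :=
              fun ⟨_, v, w⟩ => h3 ⟨v.symm, w.symm⟩
            have hD : ¬(k ≠ j ∧ m = j ∧ l = k) :=
              fun ⟨_, v, w⟩ => h4 ⟨v.symm, w.symm⟩
            have hR1 : ¬(j = l ∧ k = m ∧ k ≠ j) := fun ⟨u, v, _⟩ => h3 ⟨u, v⟩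
            have hR2 : ¬(j = m ∧ k = l ∧ k ≠ j) := fun ⟨u, v, _⟩ => h4 ⟨u, v⟩
            have hkj : ¬ k = j := fun h => h1 h.symm
            have hq1 : ¬(l = k ∧ m = j) := fun ⟨u, v⟩ => h4 ⟨v.symm, u.symm⟩
            have hq2 : ¬(m = k ∧ l = j) := fun ⟨u, v⟩ => h3 ⟨v.symm, u.symm⟩
            have hq3 : ¬(l = j ∧ m = k) := fun ⟨u, v⟩ => h3 ⟨u.symm, v.symm⟩
            have hq4 : ¬(m = j ∧ l = k) := fun ⟨u, v⟩ => h4 ⟨u.symm, v.symm⟩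
            simp [h1, h2, hA, hB, hC, hD, hR1, hR2, hkj, hq1, hq2, hq3, hq4, h3, h4]
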